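/- arXiv:1112.1469 — 2 statements merged into one kernel-verified Lean document; each statement's English description precedes it below -/
import Mathlib

section
/- Let X be a finite nonempty index set and m, n ≥ 1. For each i ∈ X let ρ_i be a density matrix on Fin m and let P_i be a positive semidefinite matrix on Fin n, with ∑_{i ∈ X} P_i = I_n, and set C = ∑_{i ∈ X} ρ_i ⊗ P_iᵀ. Then there exists a density matrix ρ₀ on Fin m such that (ρ₀ ⊗ I_n) − (1/m)·C is positive semidefinite. (Hence every measure-and-prepare channel with m-dimensional output can be simulated from the future to the past with probability at least 1/m.) -/
open Matrix
open scoped Kronecker ComplexOrder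

lemma conjTranspose_kronecker {l m p q : Type*} (A : Matrix l m ℂ) (B : Matrix p q ℂ) :
    (A ⊗ₖ B)ᴴ = Aᴴ ⊗ₖ Bᴴ := by
  ext i j
  simp [conjTranspose_apply, kroneckerMap_apply, mul_comm]

lemma posSemidef_kronecker {m p : Type*} [Fintype m] [Fintype p] [DecidableEq m] [DecidableEq p]
    {A : Matrix m m ℂ} {B : Matrix p p ℂ} (hA : A.PosSemidef) (hB : B.PosSemidef) :
    (A ⊗ₖ B).PosSemidef := by
  exact hA.kronecker hB

lemma one_sub_posSemidef {m : Type*} [Fintype m] [DecidableEq m]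
    {ρ : Matrix m m ℂ} (hρ : ρ.PosSemidef) (htr : ρ.trace = 1) :
    (1 - ρ).PosSemidef := by
  have hH := hρ.1
  have hspec := hH.spectral_theorem
  simp only [Unitary.conjStarAlgAut_apply, Unitary.coe_star] at hspec
  set U : Matrix m m ℂ := (hH.eigenvectorUnitary : Matrix m m ℂ) with hU
  have hUm : U ∈ Matrix.unitaryGroup m ℂ := hH.eigenvectorUnitary.2
  have hUU : U * star U = 1 := (Matrix.mem_unitaryGroup_iff).mp hUm
  have key : 1 - ρ = U * (1 - diagonal (RCLike.ofReal ∘ hH.eigenvalues)) * star U := by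
    rw [Matrix.mul_sub, Matrix.sub_mul, mul_one, hUU, ← hspec]
  -- eigenvalues sum to 1
  have hsum : ∑ i, hH.eigenvalues i = 1 := by
    have : ρ.trace = ∑ i, (hH.eigenvalues i : ℂ) := by
      conv_lhs => rw [hspec]
      rw [Matrix.trace_mul_cycle, (Matrix.mem_unitaryGroup_iff').mp hUm,
        one_mul, Matrix.trace_diagonal]
      simp
    rw [htr] at this
    exact_mod_cast this.symm
  have hle : ∀ i, hH.eigenvalues i ≤ 1 := by
    intro i
    rw [← hsum]
    exact Finset.single_le_sum (fun j _ => hρ.eigenvalues_nonneg j) (Finset.mem_univ i)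
  rw [key]
  apply Matrix.PosSemidef.mul_mul_conjTranspose_same
  have : (1 : Matrix m m ℂ) - diagonal (RCLike.ofReal ∘ hH.eigenvalues)
      = diagonal (fun i => (1 : ℂ) - (hH.eigenvalues i : ℂ)) := by
    rw [← diagonal_one, diagonal_sub]
    rfl
  rw [this]
  refine posSemidef_diagonal_iff.mpr fun i => ?_
  rw [← Complex.ofReal_one, ← Complex.ofReal_sub]
  exact_mod_cast sub_nonneg.mpr (hle i)


lemma posSemidef_real_smul {m : Type*} [Fintype m] {A : Matrix m m ℂ}
    (hA : A.PosSemidef) {c : ℝ} (hc : 0 ≤ c) : ((c : ℂ) • A).PosSemidef := by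
  refine posSemidef_iff_dotProduct_mulVec.mpr ⟨?_, ?_⟩
  · rw [Matrix.IsHermitian, conjTranspose_smul, hA.1.eq]
    congr 1
    simp [Complex.ext_iff]
  · intro x
    rw [Matrix.smul_mulVec, dotProduct_smul, smul_eq_mul]
    exact mul_nonneg (by exact_mod_cast hc) (hA.dotProduct_mulVec_nonneg x)


lemma posSemidef_finsum {X : Type} [Fintype X] {m : Type*} [Fintype m]
    (f : X → Matrix m m ℂ) (h : ∀ i, (f i).PosSemidef) : (∑ i, f i).PosSemidef := by
  refine posSemidef_iff_dotProduct_mulVec.mpr ⟨?_, ?_⟩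
  · rw [Matrix.IsHermitian, conjTranspose_sum]
    exact Finset.sum_congr rfl fun i _ => (h i).1
  · intro x
    have : (∑ i, f i) *ᵥ x = ∑ i, f i *ᵥ x := by
      ext j
      simp [Matrix.mulVec, dotProduct, Matrix.sum_apply, Finset.sum_mul,
        Finset.sum_comm (γ := X)]
    have h2 : star x ⬝ᵥ ∑ i, f i *ᵥ x = ∑ i, star x ⬝ᵥ (f i *ᵥ x) := by
      simp [dotProduct, Finset.sum_apply, Finset.mul_sum, Finset.sum_comm (γ := X)]
    rw [this, h2]
    exact Finset.sum_nonneg fun i _ => (h i).dotProduct_mulVec_nonneg x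

/-- Every measure-and-prepare channel with m-dimensional output can be simulated from the
future to the past with probability at least 1/m. -/
theorem measure_prepare_sim_lower_bound (X : Type) [Fintype X] [Nonempty X]
    (m n : ℕ) (hm : 1 ≤ m) (hn : 1 ≤ n)
    (ρ : X → Matrix (Fin m) (Fin m) ℂ)
    (hρ : ∀ i, (ρ i).PosSemidef) (hρtr : ∀ i, (ρ i).trace = 1)
    (P : X → Matrix (Fin n) (Fin n) ℂ)
    (hP : ∀ i, (P i).PosSemidef) (hPsum : ∑ i, P i = 1) :
    ∃ ρ₀ : Matrix (Fin m) (Fin m) ℂ, ρ₀.PosSemidef ∧ ρ₀.trace = 1 ∧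
      (ρ₀ ⊗ₖ (1 : Matrix (Fin n) (Fin n) ℂ) -
        ((1 : ℂ) / m) • ∑ i, ρ i ⊗ₖ (P i)ᵀ).PosSemidef := by
  have hm0 : (m : ℂ) ≠ 0 := by exact_mod_cast (by omega : m ≠ 0)
  have hcast : ((1 : ℂ) / m) = ((((1 : ℝ) / m) : ℝ) : ℂ) := by push_cast; ring
  have hcnn : (0 : ℝ) ≤ (1 : ℝ) / m := by positivity
  refine ⟨((1 : ℂ) / m) • 1, ?_, ?_, ?_⟩
  · rw [hcast]
    exact posSemidef_real_smul Matrix.PosSemidef.one hcnn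
  · simp [Matrix.trace_smul, Matrix.trace_one, div_mul_cancel₀, hm0]
  · have hPT : ∑ i, (P i)ᵀ = (1 : Matrix (Fin n) (Fin n) ℂ) := by
      rw [← transpose_sum, hPsum, transpose_one]
    have key : (((1 : ℂ) / m) • (1 : Matrix (Fin m) (Fin m) ℂ)) ⊗ₖ (1 : Matrix (Fin n) (Fin n) ℂ) -
        ((1 : ℂ) / m) • ∑ i, ρ i ⊗ₖ (P i)ᵀ
        = ((1 : ℂ) / m) • ∑ i, ((1 : Matrix (Fin m) (Fin m) ℂ) - ρ i) ⊗ₖ (P i)ᵀ := by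
      rw [smul_kronecker, ← smul_sub]
      congr 1
      have h1 : (1 : Matrix (Fin m) (Fin m) ℂ) ⊗ₖ (1 : Matrix (Fin n) (Fin n) ℂ)
          = ∑ i, (1 : Matrix (Fin m) (Fin m) ℂ) ⊗ₖ (P i)ᵀ := by
        ext ⟨a, b⟩ ⟨c, d⟩
        have hbd := congrFun (congrFun hPT b) d
        simp only [Matrix.sum_apply, transpose_apply] at hbd
        simp [kroneckerMap_apply, Matrix.sum_apply, ← Finset.mul_sum, hbd]
      rw [h1, ← Finset.sum_sub_distrib]
      refine Finset.sum_congr rfl fun i _ => ?_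
      ext ⟨a, b⟩ ⟨c, d⟩
      simp [kroneckerMap_apply, Matrix.sub_apply, sub_mul]
    rw [key, hcast]
    refine posSemidef_real_smul ?_ hcnn
    exact posSemidef_finsum _ fun i =>
      posSemidef_kronecker (one_sub_posSemidef (hρ i) (hρtr i)) ((hP i).transpose)
end

section
/- Let d ≥ 1 and let Φ_d be the matrix indexed by Fin d × Fin d whose entry at row (a,b), column (c,e) is 1 if a = b and c = e, and 0 otherwise. Let C_est := (1/d)·Φ_d + (1/(d+1))·(I_{d²} − Φ_d/d) be the Choi matrix of the optimal pure-state estimation channel. For a real number p ≥ 0, there exists a density matrix ρ₀ on Fin d such that (ρ₀ ⊗ I_d) − p·C_est is positive semidefinite if and only if p ≤ 1/d. (The maximum probability of simulating the optimal pure-state estimation channel from the future to the past is 1/d.) -/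
open Matrix
open scoped Kronecker ComplexOrder

/-- The projector onto the unnormalized maximally entangled vector. -/
noncomputable def PhiMax (d : ℕ) : Matrix (Fin d × Fin d) (Fin d × Fin d) ℂ :=
  Matrix.of fun p q => if p.1 = p.2 ∧ q.1 = q.2 then 1 else 0

/-- The Choi matrix of the optimal pure-state estimation channel. -/
noncomputable def Cest (d : ℕ) : Matrix (Fin d × Fin d) (Fin d × Fin d) ℂ :=
  (1 / (d : ℂ)) • PhiMax d +
    (1 / ((d : ℂ) + 1)) •
      ((1 : Matrix (Fin d × Fin d) (Fin d × Fin d) ℂ) - (1 / (d : ℂ)) • PhiMax d)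

lemma smul_psd {n : Type*} [Fintype n] {M : Matrix n n ℂ} (hM : M.PosSemidef) {c : ℝ}
    (hc : 0 ≤ c) : ((c : ℂ) • M).PosSemidef := by
  rw [posSemidef_iff_dotProduct_mulVec]
  constructor
  · unfold Matrix.IsHermitian
    rw [conjTranspose_smul, hM.1]
    simp
  · intro x
    rw [smul_mulVec, dotProduct_smul, smul_eq_mul]
    exact mul_nonneg (by exact_mod_cast Complex.zero_le_real.mpr hc) (hM.dotProduct_mulVec_nonneg x)

lemma phi_herm (d : ℕ) : (PhiMax d).IsHermitian := by
  ext p q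
  simp [PhiMax, Matrix.conjTranspose_apply, and_comm]

lemma phi_mulVec (d : ℕ) (x : Fin d × Fin d → ℂ) :
    (PhiMax d) *ᵥ x = fun p => if p.1 = p.2 then (∑ q, if q.1 = q.2 then x q else 0) else 0 := by
  funext p
  simp only [mulVec, dotProduct, PhiMax, Matrix.of_apply, ite_and]
  by_cases h : p.1 = p.2 <;> simp [h, ite_mul]

lemma phi_quad (d : ℕ) (x : Fin d × Fin d → ℂ) :
    star x ⬝ᵥ (PhiMax d) *ᵥ x
      = star (∑ q, if q.1 = q.2 then x q else 0) * (∑ q, if q.1 = q.2 then x q else 0) := by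
  rw [phi_mulVec]
  simp only [dotProduct, Pi.star_apply, star_sum, apply_ite (star : ℂ → ℂ), star_zero,
    Finset.sum_mul, ite_mul, zero_mul]
  refine Finset.sum_congr rfl fun p _ => ?_
  split_ifs <;> simp

lemma phi_psd (d : ℕ) : (PhiMax d).PosSemidef := by
  refine .of_dotProduct_mulVec_nonneg (phi_herm d) fun x => ?_
  rw [phi_quad]
  exact star_mul_self_nonneg _

lemma phi_mul_phi (d : ℕ) : PhiMax d * PhiMax d = (d : ℂ) • PhiMax d := by
  ext p q
  simp only [Matrix.mul_apply, PhiMax, Matrix.of_apply, Matrix.smul_apply, smul_eq_mul]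
  rw [Fintype.sum_prod_type]
  simp only [ite_and]
  by_cases h1 : p.1 = p.2 <;> by_cases h2 : q.1 = q.2 <;> simp [h1, h2]

lemma compl_psd (d : ℕ) (hd : 1 ≤ d) :
    ((1 : Matrix (Fin d × Fin d) (Fin d × Fin d) ℂ) - (1 / (d : ℂ)) • PhiMax d).PosSemidef := by
  have hd0 : (d : ℂ) ≠ 0 := Nat.cast_ne_zero.mpr (by omega)
  set Q : Matrix (Fin d × Fin d) (Fin d × Fin d) ℂ := (1 / (d : ℂ)) • PhiMax d with hQ
  have hherm : (1 - Q)ᴴ = 1 - Q := by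
    rw [conjTranspose_sub, conjTranspose_one, conjTranspose_smul, phi_herm d]
    congr 1
    simp [hQ, one_div]
  have hidem : (1 - Q) * (1 - Q) = 1 - Q := by
    have : Q * Q = Q := by
      rw [hQ, Matrix.smul_mul, Matrix.mul_smul, phi_mul_phi, smul_smul, smul_smul]
      congr 1
      field_simp
    rw [sub_mul, mul_sub, mul_sub, this]
    simp only [Matrix.one_mul, Matrix.mul_one, sub_self, sub_zero]
  have := Matrix.posSemidef_conjTranspose_mul_self (1 - Q)
  rwa [hherm, hidem] at this

noncomputable def vdiag (d : ℕ) : Fin d × Fin d → ℂ := fun q => if q.1 = q.2 then 1 else 0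

lemma quad_v (d : ℕ) (M : Matrix (Fin d × Fin d) (Fin d × Fin d) ℂ) :
    star (vdiag d) ⬝ᵥ M *ᵥ (vdiag d) = ∑ a, ∑ c, M (a, a) (c, c) := by
  simp only [dotProduct, mulVec, dotProduct, Pi.star_apply, vdiag, apply_ite (star : ℂ → ℂ),
    star_one, star_zero, ite_mul, one_mul, zero_mul, mul_ite, mul_one, mul_zero]
  rw [Fintype.sum_prod_type]
  simp [Fintype.sum_prod_type, Finset.sum_ite_eq]


/-- The maximum probability of simulating the optimal pure-state estimation channel
from the future to the past is 1/d. -/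
theorem estimation_channel_sim_prob (d : ℕ) (hd : 1 ≤ d) (p : ℝ) (hp : 0 ≤ p) :
    (∃ ρ₀ : Matrix (Fin d) (Fin d) ℂ, ρ₀.PosSemidef ∧ ρ₀.trace = 1 ∧
        (ρ₀ ⊗ₖ (1 : Matrix (Fin d) (Fin d) ℂ) - (p : ℂ) • Cest d).PosSemidef)
      ↔ p ≤ 1 / d := by
  have hd0R : (0 : ℝ) < d := by exact_mod_cast hd
  have hdC : (d : ℂ) ≠ 0 := Nat.cast_ne_zero.mpr (by omega)
  have hd1C : (d : ℂ) + 1 ≠ 0 := by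
    have : ((d : ℂ)) + 1 = ((d + 1 : ℕ) : ℂ) := by push_cast; ring
    rw [this]
    exact Nat.cast_ne_zero.mpr (by omega)
  constructor
  · rintro ⟨ρ₀, hρ, htr, hD⟩
    have hA : ∑ a, ∑ c, (ρ₀ ⊗ₖ (1 : Matrix (Fin d) (Fin d) ℂ)) (a, a) (c, c) = ρ₀.trace := by
      simp [kroneckerMap_apply, one_apply, mul_ite, mul_one, mul_zero, Finset.sum_ite_eq,
        Matrix.trace, Matrix.diag]
    have hC : ∑ a, ∑ c, (Cest d) (a, a) (c, c) = (d : ℂ) := by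
      simp only [Cest, Matrix.add_apply, Matrix.smul_apply, Matrix.sub_apply, Matrix.one_apply,
        PhiMax, Matrix.of_apply, Prod.mk.injEq, and_self, if_true, smul_eq_mul, mul_one,
        Finset.sum_add_distrib, Finset.sum_sub_distrib, Finset.sum_ite_eq, Finset.mem_univ,
        if_true, Finset.sum_const, Finset.card_univ, Fintype.card_fin, nsmul_eq_mul]
      simp only [mul_sub, mul_ite, mul_one, mul_zero, Finset.sum_sub_distrib, Finset.sum_ite_eq,
        Finset.mem_univ, if_true, Finset.sum_const, Finset.card_univ, Fintype.card_fin,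
        nsmul_eq_mul]
      field_simp
      ring
    have key : star (vdiag d) ⬝ᵥ (ρ₀ ⊗ₖ (1 : Matrix (Fin d) (Fin d) ℂ) - (p : ℂ) • Cest d) *ᵥ
        vdiag d = 1 - (p : ℂ) * d := by
      rw [quad_v]
      simp only [Matrix.sub_apply, Matrix.smul_apply, smul_eq_mul, Finset.sum_sub_distrib,
        ← Finset.mul_sum]
      rw [hA, htr, hC]
    have h := hD.dotProduct_mulVec_nonneg (vdiag d)
    rw [key] at h
    have hcast : ((1 - p * d : ℝ) : ℂ) = 1 - (p : ℂ) * d := by push_cast; ring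
    rw [← hcast] at h
    have hr : (0 : ℝ) ≤ 1 - p * d := Complex.zero_le_real.mp h
    rw [le_div_iff₀ hd0R]
    linarith
  · intro hple
    have ha : (0 : ℝ) ≤ 1 / d - p := by linarith
    have hb : (0 : ℝ) ≤ 1 / d - p / (d + 1) := by
      have h1 : p / (d + 1) ≤ p := div_le_self hp (by linarith)
      linarith
    refine ⟨(((d : ℝ)⁻¹ : ℝ) : ℂ) • 1, smul_psd Matrix.PosSemidef.one (by positivity), ?_, ?_⟩
    · rw [Matrix.trace_smul, Matrix.trace_one, Fintype.card_fin, smul_eq_mul]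
      push_cast
      field_simp
    · have decomp : ((((d : ℝ)⁻¹ : ℝ) : ℂ) • (1 : Matrix (Fin d) (Fin d) ℂ)) ⊗ₖ
          (1 : Matrix (Fin d) (Fin d) ℂ) - (p : ℂ) • Cest d
          = (((1 / d - p : ℝ)) : ℂ) • ((1 / (d : ℂ)) • PhiMax d) +
            (((1 / d - p / (d + 1) : ℝ)) : ℂ) •
              ((1 : Matrix (Fin d × Fin d) (Fin d × Fin d) ℂ) - (1 / (d : ℂ)) • PhiMax d) := by
        rw [Matrix.smul_kronecker, Matrix.one_kronecker_one, Cest]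
        push_cast
        match_scalars <;> field_simp <;> ring
      rw [decomp]
      have hQ : ((1 / (d : ℂ)) • PhiMax d).PosSemidef := by
        have h1 : (1 / (d : ℂ)) = (((d : ℝ)⁻¹ : ℝ) : ℂ) := by push_cast; ring
        rw [h1]
        exact smul_psd (phi_psd d) (by positivity)
      exact (smul_psd hQ ha).add (smul_psd (compl_psd d hd) hb)
end
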